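/- arXiv:1709.03389 — 2 statements merged into one kernel-verified Lean document; each statement's English description precedes it below -/
import Mathlib

section
/- Let W(x,y) = x^n + Σ_{i=d}^n A_i x^{n−i} y^i be a homogeneous polynomial with complex coefficients, 1 ≤ d ≤ n and A_d ≠ 0, and let q be a real number with q > 0 and q ≠ 1. Then there exists a unique polynomial P(T) ∈ ℂ[T] of degree at most n − d such that the coefficient of T^{n−d} in the formal power series expansion (in T, with coefficients in ℂ[x,y]) of (P(T)/((1−T)(1−qT)))·(y(1−T)+xT)^n equals (W(x,y) − x^n)/(q−1). -/
/- Zeta polynomials for invariant polynomials (Duursma / Chinen).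
`Cxy` is the polynomial ring ℂ[x,y] (with x = X 0, y = X 1).
The power series `polyToSeries P * geomQ q * bodySeries n` is the expansion of
`(P(T)/((1-T)(1-qT))) * (y(1-T)+xT)^n`, using
`1/((1-T)(1-qT)) = ∑_{m≥0} (∑_{j=0}^m q^j) T^m`. -/

noncomputable section

abbrev Cxy : Type := MvPolynomial (Fin 2) ℂ

/-- The formal power series expansion of `1/((1-T)(1-qT))`. -/
def geomQ (q : ℝ) : PowerSeries Cxy :=
  PowerSeries.mk fun m => algebraMap ℂ Cxy (∑ j ∈ Finset.range (m + 1), (q : ℂ) ^ j)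

/-- A polynomial `P(T) ∈ ℂ[T]` viewed as a power series with coefficients in ℂ[x,y]. -/
def polyToSeries (P : Polynomial ℂ) : PowerSeries Cxy :=
  PowerSeries.mk fun m => algebraMap ℂ Cxy (P.coeff m)

/-- The power series `(y(1-T) + xT)^n`. -/
def bodySeries (n : ℕ) : PowerSeries Cxy :=
  (PowerSeries.C (R := Cxy) (MvPolynomial.X 1) * (1 - PowerSeries.X)
    + PowerSeries.C (R := Cxy) (MvPolynomial.X 0) * PowerSeries.X) ^ n

/-- `P` is a zeta polynomial for `W` (of shape `x^n + ∑_{i=d}^n A_i x^{n-i} y^i`):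
it has degree at most `n - d` and the coefficient of `T^{n-d}` in
`(P(T)/((1-T)(1-qT)))(y(1-T)+xT)^n` equals `(W - x^n)/(q-1)`. -/
def IsZetaPoly (q : ℝ) (n d : ℕ) (W : Cxy) (P : Polynomial ℂ) : Prop :=
  P.degree ≤ (n - d : ℕ) ∧
  PowerSeries.coeff (R := Cxy) (n - d) (polyToSeries P * geomQ q * bodySeries n)
    = MvPolynomial.C (((q : ℂ) - 1)⁻¹) * (W - MvPolynomial.X 0 ^ n)

namespace ZetaAux
open Finset

def Bp (n v : ℕ) : Cxy :=
  (MvPolynomial.X 1) ^ (n - v) * (MvPolynomial.X 0 - MvPolynomial.X 1) ^ v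

def g (q : ℝ) (b : ℕ) : ℂ := ∑ j ∈ Finset.range (b + 1), (q : ℂ) ^ j

def S (q : ℝ) (n b : ℕ) : Cxy := PowerSeries.coeff (R := Cxy) b (geomQ q * bodySeries n)

def mu (n c : ℕ) : Fin 2 →₀ ℕ := Finsupp.single 0 c + Finsupp.single 1 (n - c)

lemma body_expand (n : ℕ) : bodySeries n =
    ∑ k ∈ range (n + 1),
      PowerSeries.C (R := Cxy) ((n.choose k : ℂ) • Bp n k) * PowerSeries.X ^ k := by
  have h1 : (PowerSeries.C (R := Cxy) (MvPolynomial.X 1) * (1 - PowerSeries.X)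
      + PowerSeries.C (R := Cxy) (MvPolynomial.X 0) * PowerSeries.X)
      = PowerSeries.C (R := Cxy) (MvPolynomial.X 0 - MvPolynomial.X 1) * PowerSeries.X
        + PowerSeries.C (R := Cxy) (MvPolynomial.X 1) := by
    rw [map_sub]; ring
  rw [bodySeries, h1, add_pow]
  refine Finset.sum_congr rfl fun k hk => ?_
  simp only [Bp, MvPolynomial.smul_eq_C_mul, map_mul, map_pow, mul_pow,
    show ((n.choose k : ℕ) : PowerSeries Cxy) = PowerSeries.C (R := Cxy) (MvPolynomial.C (n.choose k:ℂ)) from by simp]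
  ring

lemma body_coeff (n v : ℕ) :
    PowerSeries.coeff (R := Cxy) v (bodySeries n) = (n.choose v : ℂ) • Bp n v := by
  rw [body_expand, map_sum]
  by_cases hv : v ≤ n
  · rw [Finset.sum_eq_single v]
    · simp [PowerSeries.coeff_C_mul, PowerSeries.coeff_X_pow]
    · intro k hk hne
      simp [PowerSeries.coeff_C_mul, PowerSeries.coeff_X_pow, hne.symm]
    · intro h; exact absurd (mem_range.mpr (Nat.lt_succ_of_le hv)) h
  · rw [Nat.choose_eq_zero_of_lt (Nat.lt_of_not_le hv), Finset.sum_eq_zero, Nat.cast_zero, zero_smul]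
    intro k hk
    have : k ≠ v := by have := mem_range.mp hk; omega
    simp only [PowerSeries.coeff_C_mul, PowerSeries.coeff_X_pow, if_neg (Ne.symm this), mul_zero]

lemma S_eq (q : ℝ) (n b : ℕ) :
    S q n b = ∑ u ∈ range (b + 1), (g q u * (n.choose (b - u) : ℂ)) • Bp n (b - u) := by
  rw [S, PowerSeries.coeff_mul, Finset.Nat.sum_antidiagonal_eq_sum_range_succ
    (fun u v => PowerSeries.coeff (R := Cxy) u (geomQ q) * PowerSeries.coeff (R := Cxy) v (bodySeries n))]
  refine Finset.sum_congr rfl fun u hu => ?_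
  rw [geomQ, PowerSeries.coeff_mk, body_coeff, ← Algebra.smul_def, smul_smul]
  rfl

lemma coeff_mono (n c j : ℕ) :
    MvPolynomial.coeff (mu n c)
      ((MvPolynomial.X (0 : Fin 2) ^ j * MvPolynomial.X 1 ^ (n - j)) : Cxy)
    = if j = c then 1 else 0 := by
  rw [MvPolynomial.X_pow_eq_monomial, MvPolynomial.X_pow_eq_monomial,
    MvPolynomial.monomial_mul, mul_one, MvPolynomial.coeff_monomial]
  by_cases h : j = c
  · subst h; simp [mu]
  · rw [if_neg h, if_neg]
    intro heq
    apply h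
    have := congrArg (fun f => f 0) heq
    simpa [mu, Finsupp.single_apply] using this

lemma phi_Bp_eq (n c v : ℕ) (hvn : v ≤ n) :
    MvPolynomial.coeff (mu n c) (Bp n v)
    = ∑ j ∈ range (v + 1), ((-1 : ℂ)) ^ (j + v) * (v.choose j) * (if j = c then 1 else 0) := by
  rw [Bp, sub_pow, Finset.mul_sum, MvPolynomial.coeff_sum]
  refine sum_congr rfl fun j hj => ?_
  have hj' : j ≤ v := Nat.lt_succ_iff.mp (mem_range.mp hj)
  have key : ((MvPolynomial.X (1:Fin 2))^(n-v) *
      ((-1 : Cxy) ^ (j + v) * MvPolynomial.X 0 ^ j * MvPolynomial.X 1 ^ (v - j) * (v.choose j : Cxy)))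
      = MvPolynomial.C ((-1 : ℂ) ^ (j + v) * (v.choose j))
        * (MvPolynomial.X 0 ^ j * MvPolynomial.X 1 ^ (n - j)) := by
    have hY : ((MvPolynomial.X (1:Fin 2) : Cxy)) ^ (n - v) * MvPolynomial.X 1 ^ (v - j)
        = MvPolynomial.X 1 ^ (n - j) := by
      rw [← pow_add]; congr 1; omega
    rw [← hY]
    simp only [map_mul, map_pow, map_neg, map_one, map_natCast]
    push_cast
    ring
  rw [key, MvPolynomial.coeff_C_mul, coeff_mono]

lemma phi_Bp_lt (n c v : ℕ) (hvn : v ≤ n) (hvc : v < c) :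
    MvPolynomial.coeff (mu n c) (Bp n v) = 0 := by
  rw [phi_Bp_eq n c v hvn]
  refine Finset.sum_eq_zero fun j hj => ?_
  have : j ≠ c := by have := mem_range.mp hj; omega
  simp [this]

lemma phi_Bp_self (n c : ℕ) (hcn : c ≤ n) :
    MvPolynomial.coeff (mu n c) (Bp n c) = 1 := by
  rw [phi_Bp_eq n c c hcn, Finset.sum_eq_single c]
  · rw [if_pos rfl, Nat.choose_self, ← two_mul, pow_mul]
    norm_num
  · intro j hj hne; simp [hne]
  · intro h; exact absurd (self_mem_range_succ c) h

lemma phi_S_lt (q : ℝ) (n c b : ℕ) (hb : b ≤ n) (hbc : b < c) :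
    MvPolynomial.coeff (mu n c) (S q n b) = 0 := by
  rw [S_eq, MvPolynomial.coeff_sum]
  refine Finset.sum_eq_zero fun u hu => ?_
  rw [MvPolynomial.coeff_smul, phi_Bp_lt n c (b - u) (by omega) (by omega), smul_zero]

lemma phi_S_self (q : ℝ) (n b : ℕ) (hb : b ≤ n) :
    MvPolynomial.coeff (mu n b) (S q n b) = (n.choose b : ℂ) := by
  rw [S_eq, MvPolynomial.coeff_sum, Finset.sum_eq_single 0]
  · rw [MvPolynomial.coeff_smul, Nat.sub_zero, phi_Bp_self n b hb]
    simp [g]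
  · intro u hu hne
    have hu' : u ≤ b := Nat.lt_succ_iff.mp (mem_range.mp hu)
    rw [MvPolynomial.coeff_smul, phi_Bp_lt n b (b - u) (by omega) (by omega), smul_zero]
  · intro h; exact absurd (mem_range.mpr (Nat.succ_pos b)) h

lemma key_unique (q : ℝ) (n m : ℕ) (hm : m ≤ n) (f : ℕ → ℂ)
    (h : ∑ a ∈ range (m + 1), f a • S q n (m - a) = 0) :
    ∀ a, a ≤ m → f a = 0 := by
  intro a
  induction a using Nat.strong_induction_on with
  | _ a IH =>
  intro ha
  have h2 := congrArg (MvPolynomial.coeff (mu n (m - a))) h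
  rw [MvPolynomial.coeff_sum, MvPolynomial.coeff_zero] at h2
  rw [Finset.sum_eq_single a] at h2
  · rw [MvPolynomial.coeff_smul, phi_S_self q n (m - a) (by omega)] at h2
    have hch : (n.choose (m - a) : ℂ) ≠ 0 :=
      Nat.cast_ne_zero.mpr (Nat.choose_pos (show m - a ≤ n by omega)).ne'
    rw [smul_eq_mul] at h2
    exact (mul_eq_zero.mp h2).resolve_right hch
  · intro a' ha' hne
    rcases lt_or_gt_of_ne hne with hlt | hgt
    · have := mem_range.mp ha'
      rw [IH a' hlt (by omega), zero_smul, MvPolynomial.coeff_zero]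
    · have := mem_range.mp ha'
      rw [MvPolynomial.coeff_smul,
        phi_S_lt q n (m - a) (m - a') (by omega) (by omega), smul_zero]
  · intro h'; exact absurd (mem_range.mpr (by omega)) h'

lemma g_zero (q : ℝ) : g q 0 = 1 := by simp [g]

lemma Bp_mem (q : ℝ) (n m : ℕ) (hm : m ≤ n) :
    ∀ c, c ≤ m → Bp n c ∈ Submodule.span ℂ (Set.range (fun b : Fin (m + 1) => S q n b)) := by
  intro c
  induction c using Nat.strong_induction_on with
  | _ c IH =>
  intro hc
  have hexp := S_eq q n c
  rw [Finset.sum_range_succ'] at hexp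
  have hch : (n.choose c : ℂ) ≠ 0 :=
    Nat.cast_ne_zero.mpr (Nat.choose_pos (show c ≤ n by omega)).ne'
  have hBp : Bp n c = (n.choose c : ℂ)⁻¹ •
      (S q n c - ∑ u ∈ range c,
        (g q (u + 1) * (n.choose (c - (u + 1)) : ℂ)) • Bp n (c - (u + 1))) := by
    rw [hexp, g_zero, one_mul, Nat.sub_zero, add_sub_cancel_left, smul_smul,
      inv_mul_cancel₀ hch, one_smul]
  rw [hBp]
  refine Submodule.smul_mem _ _ (Submodule.sub_mem _ ?_ (Submodule.sum_mem _ fun u hu => ?_))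
  · exact Submodule.subset_span ⟨⟨c, by omega⟩, rfl⟩
  · have hu' := mem_range.mp hu
    exact Submodule.smul_mem _ _ (IH (c - (u + 1)) (by omega) (by omega))

lemma monom_eq (n i : ℕ) (hi : i ≤ n) :
    (MvPolynomial.X (0 : Fin 2) ^ (n - i) * MvPolynomial.X 1 ^ i : Cxy)
      = ∑ c ∈ range (n - i + 1), ((n - i).choose c : ℂ) • Bp n c := by
  have h0 : (MvPolynomial.X (0 : Fin 2) : Cxy)
      = (MvPolynomial.X 0 - MvPolynomial.X 1) + MvPolynomial.X 1 := by ring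
  calc (MvPolynomial.X (0 : Fin 2) ^ (n - i) * MvPolynomial.X 1 ^ i : Cxy)
      = ((MvPolynomial.X 0 - MvPolynomial.X 1) + MvPolynomial.X 1) ^ (n - i)
        * MvPolynomial.X 1 ^ i := by rw [← h0]
    _ = _ := by
        rw [add_pow, Finset.sum_mul]
        refine Finset.sum_congr rfl fun c hc => ?_
        have hc' : c ≤ n - i := Nat.lt_succ_iff.mp (mem_range.mp hc)
        rw [Bp, MvPolynomial.smul_eq_C_mul, map_natCast]
        have hY : (MvPolynomial.X (1 : Fin 2) : Cxy) ^ (n - i - c) * MvPolynomial.X 1 ^ i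
            = MvPolynomial.X 1 ^ (n - c) := by
          rw [← pow_add]; congr 1; omega
        rw [← hY]
        ring

lemma RHS_mem (q : ℝ) (n d m : ℕ) (hd : d ≤ n) (hm : m = n - d) (A : ℕ → ℂ) (W : Cxy)
    (hW : W = MvPolynomial.X 0 ^ n +
      ∑ i ∈ Finset.Icc d n, MvPolynomial.C (A i) * MvPolynomial.X 0 ^ (n - i) *
        MvPolynomial.X 1 ^ i) :
    MvPolynomial.C (((q : ℂ) - 1)⁻¹) * (W - MvPolynomial.X 0 ^ n)
      ∈ Submodule.span ℂ (Set.range (fun b : Fin (m + 1) => S q n b)) := by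
  rw [hW, add_sub_cancel_left, Finset.mul_sum]
  refine Submodule.sum_mem _ fun i hi => ?_
  obtain ⟨hdi, hin⟩ := Finset.mem_Icc.mp hi
  have : MvPolynomial.C (((q : ℂ) - 1)⁻¹) *
      (MvPolynomial.C (A i) * MvPolynomial.X 0 ^ (n - i) * MvPolynomial.X 1 ^ i)
      = (((q : ℂ) - 1)⁻¹ * A i) •
        (MvPolynomial.X (0 : Fin 2) ^ (n - i) * MvPolynomial.X 1 ^ i : Cxy) := by
    rw [MvPolynomial.smul_eq_C_mul, map_mul]; ring
  rw [this, monom_eq n i hin]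
  refine Submodule.smul_mem _ _ (Submodule.sum_mem _ fun c hc => ?_)
  have hc' := mem_range.mp hc
  exact Submodule.smul_mem _ _ (Bp_mem q n m (by omega) c (by omega))

lemma coeff_prod (q : ℝ) (n m : ℕ) (P : Polynomial ℂ) :
    PowerSeries.coeff (R := Cxy) m (polyToSeries P * geomQ q * bodySeries n)
      = ∑ a ∈ range (m + 1), P.coeff a • S q n (m - a) := by
  rw [mul_assoc, PowerSeries.coeff_mul, Finset.Nat.sum_antidiagonal_eq_sum_range_succ
    (fun a b => PowerSeries.coeff (R := Cxy) a (polyToSeries P)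
      * PowerSeries.coeff (R := Cxy) b (geomQ q * bodySeries n))]
  refine Finset.sum_congr rfl fun a _ => ?_
  rw [polyToSeries, PowerSeries.coeff_mk, ← Algebra.smul_def]
  rfl

end ZetaAux


/-- existence and uniqueness of the zeta polynomial. -/
theorem exists_unique_zeta_poly (n d : ℕ) (hd1 : 1 ≤ d) (hdn : d ≤ n)
    (q : ℝ) (hq0 : 0 < q) (hq1 : q ≠ 1) (A : ℕ → ℂ) (hAd : A d ≠ 0) (W : Cxy)
    (hW : W = MvPolynomial.X 0 ^ n +
      ∑ i ∈ Finset.Icc d n, MvPolynomial.C (A i) * MvPolynomial.X 0 ^ (n - i) *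
        MvPolynomial.X 1 ^ i) :
    ∃! P : Polynomial ℂ, IsZetaPoly q n d W P := by
  classical
  set m := n - d with hm
  have hmn : m ≤ n := Nat.sub_le n d
  -- existence
  obtain ⟨cf, hcf⟩ := (Submodule.mem_span_range_iff_exists_fun (R := ℂ)).mp
    (ZetaAux.RHS_mem q n d m hdn hm A W hW)
  set c' : ℕ → ℂ := fun b => if h : b < m + 1 then cf ⟨b, h⟩ else 0 with hc'
  have hsum : ∑ b ∈ Finset.range (m + 1), c' b • ZetaAux.S q n b
      = MvPolynomial.C (((q : ℂ) - 1)⁻¹) * (W - MvPolynomial.X 0 ^ n) := by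
    rw [← hcf, ← Fin.sum_univ_eq_sum_range (fun b => c' b • ZetaAux.S q n b) (m + 1)]
    refine Finset.sum_congr rfl fun i _ => ?_
    simp [hc', i.isLt, not_lt.mpr (Fin.is_le i)]
  set P : Polynomial ℂ :=
    ∑ a ∈ Finset.range (m + 1), Polynomial.C (c' (m - a)) * Polynomial.X ^ a with hP
  have hPc : ∀ j, P.coeff j = if j < m + 1 then c' (m - j) else 0 := by
    intro j
    rw [hP, Polynomial.finset_sum_coeff]
    simp only [Polynomial.coeff_C_mul, Polynomial.coeff_X_pow, mul_ite, mul_one, mul_zero]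
    rw [Finset.sum_ite_eq]
    simp [Finset.mem_range]
  have hdeg : P.degree ≤ (m : ℕ) := by
    refine (Polynomial.degree_le_iff_coeff_zero P m).mpr fun k hk => ?_
    have hk' : m < k := by exact_mod_cast hk
    rw [hPc k, if_neg (by omega)]
  have hcoeff : PowerSeries.coeff (R := Cxy) m (polyToSeries P * geomQ q * bodySeries n)
      = MvPolynomial.C (((q : ℂ) - 1)⁻¹) * (W - MvPolynomial.X 0 ^ n) := by
    rw [ZetaAux.coeff_prod]
    have h1 : ∑ a ∈ Finset.range (m + 1), P.coeff a • ZetaAux.S q n (m - a)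
        = ∑ a ∈ Finset.range (m + 1), c' (m - a) • ZetaAux.S q n (m - a) :=
      Finset.sum_congr rfl fun a ha => by rw [hPc a, if_pos (Finset.mem_range.mp ha)]
    have h2 := Finset.sum_range_reflect (fun b => c' b • ZetaAux.S q n b) (m + 1)
    simp only [Nat.add_sub_cancel] at h2
    rw [h1, h2, hsum]
  -- uniqueness
  have key : ∀ P1 P2 : Polynomial ℂ, IsZetaPoly q n d W P1 → IsZetaPoly q n d W P2 →
      P1 = P2 := by
    intro P1 P2 h1 h2
    have h0 : ∑ a ∈ Finset.range (m + 1),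
        (P1.coeff a - P2.coeff a) • ZetaAux.S q n (m - a) = 0 := by
      simp only [sub_smul]
      rw [Finset.sum_sub_distrib, ← ZetaAux.coeff_prod q n m P1,
        ← ZetaAux.coeff_prod q n m P2, h1.2, h2.2, sub_self]
    have hz := ZetaAux.key_unique q n m hmn _ h0
    ext j
    by_cases hj : j ≤ m
    · have := hz j hj
      linear_combination this
    · rw [Polynomial.coeff_eq_zero_of_degree_lt
        (lt_of_le_of_lt h1.1 (by exact_mod_cast Nat.lt_of_not_le hj)),
        Polynomial.coeff_eq_zero_of_degree_lt
        (lt_of_le_of_lt h2.1 (by exact_mod_cast Nat.lt_of_not_le hj))]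
  exact ⟨P, ⟨hdeg, hcoeff⟩, fun P' hP' => key P' P hP' ⟨hdeg, hcoeff⟩⟩


end
end

section
/- Let q = 6 + 2√5, σ = (1/√q)·[[1, q−1],[1, −1]], τ = [[1, 0],[0, −1]], and let G = ⟨σ, τ⟩ ⊆ GL₂(ℝ) (a group of order 10). Then for every complex number λ such that det(I − λA) ≠ 0 for all A ∈ G and λ² ≠ 1 and λ⁵ ≠ 1, one has (1/10)·Σ_{A∈G} 1/det(I − λA) = 1/((1 − λ²)(1 − λ⁵)). (That is, the Molien series of G equals 1/((1−λ²)(1−λ⁵)).) -/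
/- STATEMENT 3: Molien series of G = ⟨σ, τ⟩ ⊆ GL₂(ℝ) (q = 6 + 2√5):
for every λ ∈ ℂ with det(I - λA) ≠ 0 for all A ∈ G, λ² ≠ 1 and λ⁵ ≠ 1,
(1/10) ∑_{A ∈ G} 1/det(I - λA) = 1/((1-λ²)(1-λ⁵)). -/

noncomputable section

def qval : ℝ := 6 + 2 * Real.sqrt 5

def sigmaMat : Matrix (Fin 2) (Fin 2) ℝ :=
  (Real.sqrt qval)⁻¹ • !![1, qval - 1; 1, -1]

def tauMat : Matrix (Fin 2) (Fin 2) ℝ := !![1, 0; 0, -1]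

/-- `det(I - λA)`, viewing the real matrix `A` as a complex matrix. -/
def molienDet (lam : ℂ) (A : GL (Fin 2) ℝ) : ℂ :=
  Matrix.det (1 - lam • ((A : Matrix (Fin 2) (Fin 2) ℝ).map (Complex.ofReal)))

/-! ### Auxiliary matrix computations -/

section Aux

set_option linter.unusedSectionVars false

private def Am (s : ℝ) : Matrix (Fin 2) (Fin 2) ℝ := !![(s-1)/4, (3*s+5)/4; (s-1)/4, (1-s)/4]
private def Mm (s : ℝ) : Matrix (Fin 2) (Fin 2) ℝ := !![(s-1)/4, -((3*s+5)/4); (s-1)/4, (s-1)/4]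
private def M2m (s : ℝ) : Matrix (Fin 2) (Fin 2) ℝ := !![-(1+s)/4, -((5+s)/4); (3-s)/4, -(1+s)/4]
private def M3m (s : ℝ) : Matrix (Fin 2) (Fin 2) ℝ := !![-(1+s)/4, (5+s)/4; (s-3)/4, -(1+s)/4]
private def M4m (s : ℝ) : Matrix (Fin 2) (Fin 2) ℝ := !![(s-1)/4, (5+3*s)/4; (1-s)/4, (s-1)/4]

variable {s : ℝ} (hs : s ^ 2 = 5)

private lemma sigmaMat_eq : sigmaMat = Am (Real.sqrt 5) := by
  have h5 : Real.sqrt 5 ^ 2 = 5 := Real.sq_sqrt (by norm_num)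
  have hq : Real.sqrt qval = 1 + Real.sqrt 5 := by
    rw [show qval = (1 + Real.sqrt 5) ^ 2 by rw [qval]; nlinarith [h5]]
    exact Real.sqrt_sq (by positivity)
  have hne : (1 : ℝ) + Real.sqrt 5 ≠ 0 := by positivity
  unfold sigmaMat Am
  rw [hq]
  ext i j
  fin_cases i <;> fin_cases j <;>
    simp [qval, Matrix.smul_apply] <;> field_simp <;> nlinarith [h5]

include hs

private lemma hAA : Am s * Am s = 1 := by
  ext i j
  fin_cases i <;> fin_cases j <;>
    simp [Am, Matrix.mul_apply, Fin.sum_univ_two, Matrix.one_apply] <;> nlinarith [hs]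

private lemma hAT : Am s * tauMat = Mm s := by
  ext i j
  fin_cases i <;> fin_cases j <;>
    simp [Am, tauMat, Mm, Matrix.mul_apply, Fin.sum_univ_two] <;> ring

private lemma hTA : tauMat * Am s = M4m s := by
  ext i j
  fin_cases i <;> fin_cases j <;>
    simp [Am, tauMat, M4m, Matrix.mul_apply, Fin.sum_univ_two] <;> ring

private lemma hAM : Am s * Mm s = tauMat := by
  rw [← hAT hs, ← mul_assoc, hAA hs, one_mul]

private lemma hMM : Mm s * Mm s = M2m s := by
  ext i j
  fin_cases i <;> fin_cases j <;>
    simp [Mm, M2m, Matrix.mul_apply, Fin.sum_univ_two] <;> nlinarith [hs]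

private lemma hM3 : M2m s * Mm s = M3m s := by
  ext i j
  fin_cases i <;> fin_cases j <;>
    simp [Mm, M2m, M3m, Matrix.mul_apply, Fin.sum_univ_two] <;> nlinarith [hs]

private lemma hM4 : M3m s * Mm s = M4m s := by
  ext i j
  fin_cases i <;> fin_cases j <;>
    simp [Mm, M3m, M4m, Matrix.mul_apply, Fin.sum_univ_two] <;> nlinarith [hs]

private lemma hM5 : M4m s * Mm s = 1 := by
  ext i j
  fin_cases i <;> fin_cases j <;>
    simp [Mm, M4m, Matrix.mul_apply, Fin.sum_univ_two, Matrix.one_apply] <;> nlinarith [hs]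

private lemma detAm : (Am s).det = -1 := by
  simp [Am, Matrix.det_fin_two]; nlinarith [hs]
private lemma detMm : (Mm s).det = 1 := by
  simp [Mm, Matrix.det_fin_two]; nlinarith [hs]
private lemma detM2m : (M2m s).det = 1 := by
  simp [M2m, Matrix.det_fin_two]; nlinarith [hs]
private lemma detM3m : (M3m s).det = 1 := by
  simp [M3m, Matrix.det_fin_two]; nlinarith [hs]
private lemma detM4m : (M4m s).det = 1 := by
  simp [M4m, Matrix.det_fin_two]; nlinarith [hs]

private lemma trAm : (Am s).trace = 0 := by simp [Am, Matrix.trace_fin_two]; ring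
private lemma trMm : (Mm s).trace = (s-1)/2 := by simp [Mm, Matrix.trace_fin_two]; ring
private lemma trM2m : (M2m s).trace = -(1+s)/2 := by simp [M2m, Matrix.trace_fin_two]; ring
private lemma trM3m : (M3m s).trace = -(1+s)/2 := by simp [M3m, Matrix.trace_fin_two]; ring
private lemma trM4m : (M4m s).trace = (s-1)/2 := by simp [M4m, Matrix.trace_fin_two]; ring
private lemma trTau : (tauMat).trace = 0 := by simp [tauMat, Matrix.trace_fin_two]
private lemma detTau : (tauMat).det = -1 := by simp [tauMat, Matrix.det_fin_two]

private lemma trAM2 : (Am s * M2m s).trace = 0 := by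
  simp [Am, M2m, Matrix.trace_fin_two, Matrix.mul_apply, Fin.sum_univ_two]; nlinarith [hs]
private lemma trAM3 : (Am s * M3m s).trace = 0 := by
  simp [Am, M3m, Matrix.trace_fin_two, Matrix.mul_apply, Fin.sum_univ_two]; nlinarith [hs]
private lemma trAM4 : (Am s * M4m s).trace = 0 := by
  simp [Am, M4m, Matrix.trace_fin_two, Matrix.mul_apply, Fin.sum_univ_two]; nlinarith [hs]

end Aux

/-! ### Dihedral group machinery -/

private def dihPow {G : Type*} [Group G] (b : G) (i : ZMod 5) : G := b ^ i.val

private lemma pow_mod_five {G : Type*} [Group G] {b : G} (hb : b ^ 5 = 1) (n : ℕ) :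
    b ^ (n % 5) = b ^ n := by
  conv_rhs => rw [← Nat.div_add_mod n 5]
  rw [pow_add, pow_mul, hb, one_pow, one_mul]

private lemma dihPow_mul {G : Type*} [Group G] {b : G} (hb : b ^ 5 = 1) (i j : ZMod 5) :
    dihPow b i * dihPow b j = dihPow b (i + j) := by
  unfold dihPow
  rw [← pow_add, ZMod.val_add, pow_mod_five hb]

private lemma dihPow_zero {G : Type*} [Group G] (b : G) : dihPow b 0 = 1 := by
  simp [dihPow]

private lemma dihPow_inv {G : Type*} [Group G] {b : G} (hb : b ^ 5 = 1) (i : ZMod 5) :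
    (dihPow b i)⁻¹ = dihPow b (-i) := by
  exact inv_eq_of_mul_eq_one_right (by rw [dihPow_mul hb, add_neg_cancel, dihPow_zero])

private def dihHom {G : Type*} [Group G] (a b : G) (ha : a * a = 1) (hb : b ^ 5 = 1)
    (hrel : a * b * a = b⁻¹) : DihedralGroup 5 →* G where
  toFun x := match x with
    | .r i => dihPow b i
    | .sr i => a * dihPow b i
  map_one' := by show dihPow b 0 = 1; exact dihPow_zero b
  map_mul' := by
    have hainv : a⁻¹ = a := inv_eq_of_mul_eq_one_right ha
    have hconj : ∀ k : ℕ, a * b ^ k * a = (b ^ k)⁻¹ := by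
      intro k
      calc a * b ^ k * a = a * b ^ k * a⁻¹ := by rw [hainv]
        _ = (a * b * a⁻¹) ^ k := conj_pow.symm
        _ = (b⁻¹) ^ k := by rw [hainv, hrel]
        _ = (b ^ k)⁻¹ := by rw [inv_pow]
    have hswap : ∀ i : ZMod 5, dihPow b i * a = a * dihPow b (-i) := by
      intro i
      rw [← dihPow_inv hb]
      calc dihPow b i * a = (a * a) * (dihPow b i * a) := by rw [ha, one_mul]
        _ = a * (a * dihPow b i * a) := by group
        _ = a * (dihPow b i)⁻¹ := by rw [show a * dihPow b i * a = (dihPow b i)⁻¹ from hconj i.val]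
    rintro (i | i) (j | j) <;>
      simp only [DihedralGroup.r_mul_r, DihedralGroup.r_mul_sr, DihedralGroup.sr_mul_r,
        DihedralGroup.sr_mul_sr] <;> symm
    · show dihPow b i * dihPow b j = dihPow b (i + j)
      exact dihPow_mul hb i j
    · show dihPow b i * (a * dihPow b j) = a * dihPow b (j - i)
      rw [← mul_assoc, hswap, mul_assoc, dihPow_mul hb, neg_add_eq_sub]
    · show a * dihPow b i * dihPow b j = a * dihPow b (i + j)
      rw [mul_assoc, dihPow_mul hb]
    · show (a * dihPow b i) * (a * dihPow b j) = dihPow b (j - i)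
      calc (a * dihPow b i) * (a * dihPow b j)
          = a * (dihPow b i * a) * dihPow b j := by group
        _ = a * (a * dihPow b (-i)) * dihPow b j := by rw [hswap]
        _ = (a * a) * (dihPow b (-i) * dihPow b j) := by group
        _ = dihPow b (j - i) := by rw [ha, one_mul, dihPow_mul hb, neg_add_eq_sub]

private def dihEquiv : (ZMod 5 ⊕ ZMod 5) ≃ DihedralGroup 5 where
  toFun x := match x with
    | .inl j => .r j
    | .inr j => .sr j
  invFun x := match x with
    | .r j => .inl j
    | .sr j => .inr j
  left_inv := by rintro (x | x) <;> rfl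
  right_inv := by rintro (x | x) <;> rfl

private lemma dihHom_r {G : Type*} [Group G] (a b : G) (ha : a * a = 1) (hb : b ^ 5 = 1)
    (hrel : a * b * a = b⁻¹) (i : ZMod 5) :
    dihHom a b ha hb hrel (.r i) = b ^ i.val := rfl

private lemma dihHom_sr {G : Type*} [Group G] (a b : G) (ha : a * a = 1) (hb : b ^ 5 = 1)
    (hrel : a * b * a = b⁻¹) (i : ZMod 5) :
    dihHom a b ha hb hrel (.sr i) = a * b ^ i.val := rfl

private lemma molienDet_eq (lam : ℂ) (X : GL (Fin 2) ℝ) :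
    molienDet lam X = 1 - ((X : Matrix (Fin 2) (Fin 2) ℝ).trace : ℂ) * lam
      + ((X : Matrix (Fin 2) (Fin 2) ℝ).det : ℂ) * lam ^ 2 := by
  rw [molienDet, Matrix.det_fin_two, Matrix.trace_fin_two, Matrix.det_fin_two]
  simp [Matrix.one_apply, Matrix.map_apply]
  ring

theorem molien_series (σ τ : GL (Fin 2) ℝ)
    (hσ : (σ : Matrix (Fin 2) (Fin 2) ℝ) = sigmaMat)
    (hτ : (τ : Matrix (Fin 2) (Fin 2) ℝ) = tauMat) :
    ∀ lam : ℂ,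
      (∀ A ∈ Subgroup.closure ({σ, τ} : Set (GL (Fin 2) ℝ)), molienDet lam A ≠ 0) →
      lam ^ 2 ≠ 1 → lam ^ 5 ≠ 1 →
      (1 / 10 : ℂ) * (∑ᶠ A ∈ (Subgroup.closure ({σ, τ} : Set (GL (Fin 2) ℝ)) :
          Subgroup (GL (Fin 2) ℝ)), (molienDet lam A)⁻¹)
        = 1 / ((1 - lam ^ 2) * (1 - lam ^ 5)) := by
  intro lam h h2 h5
  have hs : Real.sqrt 5 ^ 2 = 5 := Real.sq_sqrt (by norm_num)
  have hA : (σ : Matrix (Fin 2) (Fin 2) ℝ) = Am (Real.sqrt 5) := by rw [hσ, sigmaMat_eq]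
  set rU := σ * τ with hrU
  have hrcoe : (↑rU : Matrix (Fin 2) (Fin 2) ℝ) = Mm (Real.sqrt 5) := by
    rw [hrU, Units.val_mul, hA, hτ, hAT hs]
  have hσ2 : σ * σ = 1 := Units.ext (by rw [Units.val_mul, hA, hAA hs, Units.val_one])
  have p2 : Mm (Real.sqrt 5) ^ 2 = M2m (Real.sqrt 5) := by rw [pow_two]; exact hMM hs
  have p3 : Mm (Real.sqrt 5) ^ 3 = M3m (Real.sqrt 5) := by
    rw [show Mm (Real.sqrt 5) ^ 3 = Mm (Real.sqrt 5) ^ 2 * Mm (Real.sqrt 5) from pow_succ _ 2,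
      p2]; exact hM3 hs
  have p4 : Mm (Real.sqrt 5) ^ 4 = M4m (Real.sqrt 5) := by
    rw [show Mm (Real.sqrt 5) ^ 4 = Mm (Real.sqrt 5) ^ 3 * Mm (Real.sqrt 5) from pow_succ _ 3,
      p3]; exact hM4 hs
  have p5 : Mm (Real.sqrt 5) ^ 5 = 1 := by
    rw [show Mm (Real.sqrt 5) ^ 5 = Mm (Real.sqrt 5) ^ 4 * Mm (Real.sqrt 5) from pow_succ _ 4,
      p4]; exact hM5 hs
  have hr2coe : (↑(rU ^ 2) : Matrix (Fin 2) (Fin 2) ℝ) = M2m (Real.sqrt 5) := by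
    rw [Units.val_pow_eq_pow_val, hrcoe, p2]
  have hr3coe : (↑(rU ^ 3) : Matrix (Fin 2) (Fin 2) ℝ) = M3m (Real.sqrt 5) := by
    rw [Units.val_pow_eq_pow_val, hrcoe, p3]
  have hr4coe : (↑(rU ^ 4) : Matrix (Fin 2) (Fin 2) ℝ) = M4m (Real.sqrt 5) := by
    rw [Units.val_pow_eq_pow_val, hrcoe, p4]
  have hr5 : rU ^ 5 = 1 := by
    apply Units.ext
    rw [Units.val_pow_eq_pow_val, hrcoe, p5, Units.val_one]
  have hrel4 : σ * rU * σ = rU ^ 4 := by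
    apply Units.ext
    rw [Units.val_mul, Units.val_mul, hA, hrcoe, hAM hs, hr4coe, hTA hs]
  have hrinv : σ * rU * σ = rU⁻¹ := by
    rw [hrel4]
    symm
    exact inv_eq_of_mul_eq_one_right (by rw [← pow_succ', hr5])
  set φ := dihHom σ rU hσ2 hr5 hrinv with hφ
  have hσmem : σ ∈ Subgroup.closure ({σ, τ} : Set (GL (Fin 2) ℝ)) :=
    Subgroup.subset_closure (by simp)
  have hτmem : τ ∈ Subgroup.closure ({σ, τ} : Set (GL (Fin 2) ℝ)) :=
    Subgroup.subset_closure (by simp)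
  have hrmem : rU ∈ Subgroup.closure ({σ, τ} : Set (GL (Fin 2) ℝ)) := mul_mem hσmem hτmem
  -- range characterization
  have hrange : Subgroup.closure ({σ, τ} : Set (GL (Fin 2) ℝ)) = φ.range := by
    apply le_antisymm
    · rw [Subgroup.closure_le]
      refine Set.insert_subset ?_ (Set.singleton_subset_iff.mpr ?_)
      · exact ⟨DihedralGroup.sr 0, by
          show σ * dihPow rU 0 = _; rw [dihPow_zero, mul_one]⟩
      · refine ⟨DihedralGroup.sr 1, ?_⟩
        show σ * dihPow rU 1 = τ
        have h1 : dihPow rU 1 = rU := by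
          unfold dihPow
          rw [show (1 : ZMod 5).val = 1 from rfl, pow_one]
        rw [h1, hrU, ← mul_assoc, hσ2, one_mul]
    · rintro x ⟨y, rfl⟩
      cases y with
      | r i => exact pow_mem hrmem _
      | sr i => exact mul_mem hσmem (pow_mem hrmem _)
  -- injectivity
  have hrne1 : rU ≠ 1 := by
    intro hh
    have h10 : Mm (Real.sqrt 5) 1 0 = (1 : Matrix (Fin 2) (Fin 2) ℝ) 1 0 := by
      rw [← hrcoe, hh, Units.val_one]
    simp [Mm, Matrix.one_apply] at h10
    nlinarith [hs]
  have hfact : Fact (Nat.Prime 5) := ⟨by norm_num⟩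
  have hord : orderOf rU = 5 := orderOf_eq_prime hr5 hrne1
  have hinj : Function.Injective φ := by
    rw [injective_iff_map_eq_one]
    rintro (i | i) hx
    · have hx' : rU ^ i.val = 1 := hx
      have hdvd : (5 : ℕ) ∣ i.val := by
        have hd := orderOf_dvd_of_pow_eq_one hx'
        rwa [hord] at hd
      have hv0 : i.val = 0 := Nat.eq_zero_of_dvd_of_lt hdvd (ZMod.val_lt i)
      have hi0 : i = 0 := by rwa [← ZMod.val_eq_zero]
      rw [hi0]
      rfl
    · exfalso
      have hx' : σ * rU ^ i.val = 1 := hx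
      have hdet : (Am (Real.sqrt 5)).det * (Mm (Real.sqrt 5)).det ^ i.val = 1 := by
        have h3 := congrArg (fun u : GL (Fin 2) ℝ => ((u : Matrix (Fin 2) (Fin 2) ℝ)).det) hx'
        simpa [Units.val_mul, Units.val_pow_eq_pow_val, hA, hrcoe, Matrix.det_mul,
          Matrix.det_pow] using h3
      rw [detAm hs, detMm hs, one_pow] at hdet
      norm_num at hdet
  -- values of molienDet on the ten elements
  set c : ℂ := ((Real.sqrt 5 : ℝ) : ℂ) with hcdef
  have hsc : c ^ 2 = 5 := by rw [hcdef]; exact_mod_cast hs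
  have m0 : molienDet lam (rU ^ 0) = 1 - 2*lam + lam^2 := by
    rw [molienDet_eq, pow_zero, Units.val_one, Matrix.trace_one, Matrix.det_one]
    push_cast
    norm_num [Fintype.card_fin]
  have m1 : molienDet lam (rU ^ 1) = 1 - (c-1)/2*lam + lam^2 := by
    rw [molienDet_eq, pow_one, hrcoe, trMm hs, detMm hs, hcdef]
    push_cast
    ring
  have m2 : molienDet lam (rU ^ 2) = 1 + (c+1)/2*lam + lam^2 := by
    rw [molienDet_eq, hr2coe, trM2m hs, detM2m hs, hcdef]
    push_cast
    ring
  have m3 : molienDet lam (rU ^ 3) = 1 + (c+1)/2*lam + lam^2 := by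
    rw [molienDet_eq, hr3coe, trM3m hs, detM3m hs, hcdef]
    push_cast
    ring
  have m4 : molienDet lam (rU ^ 4) = 1 - (c-1)/2*lam + lam^2 := by
    rw [molienDet_eq, hr4coe, trM4m hs, detM4m hs, hcdef]
    push_cast
    ring
  have w0 : molienDet lam (σ * rU ^ 0) = 1 - lam^2 := by
    rw [pow_zero, mul_one, molienDet_eq, hA, trAm hs, detAm hs]
    push_cast
    ring
  have w1 : molienDet lam (σ * rU ^ 1) = 1 - lam^2 := by
    rw [pow_one, molienDet_eq, Units.val_mul, hA, hrcoe, hAM hs, trTau hs, detTau hs]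
    push_cast
    ring
  have w2 : molienDet lam (σ * rU ^ 2) = 1 - lam^2 := by
    rw [molienDet_eq, Units.val_mul, hA, hr2coe, trAM2 hs, Matrix.det_mul, detAm hs, detM2m hs]
    push_cast
    ring
  have w3 : molienDet lam (σ * rU ^ 3) = 1 - lam^2 := by
    rw [molienDet_eq, Units.val_mul, hA, hr3coe, trAM3 hs, Matrix.det_mul, detAm hs, detM3m hs]
    push_cast
    ring
  have w4 : molienDet lam (σ * rU ^ 4) = 1 - lam^2 := by
    rw [molienDet_eq, Units.val_mul, hA, hr4coe, trAM4 hs, Matrix.det_mul, detAm hs, detM4m hs]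
    push_cast
    ring
  -- reduce the finsum to a finite sum over the dihedral group
  rw [hrange]
  have hstep1 : ∑ᶠ A ∈ (φ.range : Subgroup (GL (Fin 2) ℝ)), (molienDet lam A)⁻¹
      = ∑ᶠ A ∈ Set.range φ, (molienDet lam A)⁻¹ := rfl
  have hstep2 : ∑ᶠ A ∈ Set.range φ, (molienDet lam A)⁻¹
      = ∑ y : DihedralGroup 5, (molienDet lam (φ y))⁻¹ := by
    rw [finsum_mem_range hinj, finsum_eq_sum_of_fintype]
  have hstep3 : ∑ y : DihedralGroup 5, (molienDet lam (φ y))⁻¹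
      = (∑ i : ZMod 5, (molienDet lam (φ (DihedralGroup.r i)))⁻¹)
        + ∑ i : ZMod 5, (molienDet lam (φ (DihedralGroup.sr i)))⁻¹ := by
    rw [← Equiv.sum_comp dihEquiv (fun y => (molienDet lam (φ y))⁻¹), Fintype.sum_sum_type]
    rfl
  have hrots : (∑ i : ZMod 5, (molienDet lam (φ (DihedralGroup.r i)))⁻¹)
      = (molienDet lam (rU ^ 0))⁻¹ + (molienDet lam (rU ^ 1))⁻¹ + (molienDet lam (rU ^ 2))⁻¹
        + (molienDet lam (rU ^ 3))⁻¹ + (molienDet lam (rU ^ 4))⁻¹ := by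
    rw [show (∑ i : ZMod 5, (molienDet lam (φ (DihedralGroup.r i)))⁻¹) = _ from
      Fin.sum_univ_five _]
    simp only [hφ, dihHom_r, show (0 : ZMod 5).val = 0 from rfl, show (1 : ZMod 5).val = 1 from rfl,
      show (2 : ZMod 5).val = 2 from rfl, show (3 : ZMod 5).val = 3 from rfl,
      show (4 : ZMod 5).val = 4 from rfl]
    rfl
  have hrefl : (∑ i : ZMod 5, (molienDet lam (φ (DihedralGroup.sr i)))⁻¹)
      = (molienDet lam (σ * rU ^ 0))⁻¹ + (molienDet lam (σ * rU ^ 1))⁻¹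
        + (molienDet lam (σ * rU ^ 2))⁻¹ + (molienDet lam (σ * rU ^ 3))⁻¹
        + (molienDet lam (σ * rU ^ 4))⁻¹ := by
    rw [show (∑ i : ZMod 5, (molienDet lam (φ (DihedralGroup.sr i)))⁻¹) = _ from
      Fin.sum_univ_five _]
    simp only [hφ, dihHom_sr, show (0 : ZMod 5).val = 0 from rfl, show (1 : ZMod 5).val = 1 from rfl,
      show (2 : ZMod 5).val = 2 from rfl, show (3 : ZMod 5).val = 3 from rfl,
      show (4 : ZMod 5).val = 4 from rfl]
    rfl
  rw [hstep1, hstep2, hstep3, hrots, hrefl, m0, m1, m2, m3, m4, w0, w1, w2, w3, w4]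
  -- nonvanishing of denominators
  have hd0 : (1:ℂ) - 2*lam + lam^2 ≠ 0 := by
    rw [← m0]; exact h _ (pow_mem hrmem 0)
  have hdA : (1:ℂ) - (c-1)/2*lam + lam^2 ≠ 0 := by
    rw [← m1]; exact h _ (pow_mem hrmem 1)
  have hdB : (1:ℂ) + (c+1)/2*lam + lam^2 ≠ 0 := by
    rw [← m2]; exact h _ (pow_mem hrmem 2)
  have hc2 : (1:ℂ) - lam^2 ≠ 0 := sub_ne_zero.mpr (Ne.symm h2)
  have hc5 : (1:ℂ) - lam^5 ≠ 0 := sub_ne_zero.mpr (Ne.symm h5)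
  have hprod : (1 - (c-1)/2*lam + lam^2) * (1 + (c+1)/2*lam + lam^2)
      = 1 + lam + lam^2 + lam^3 + lam^4 := by
    linear_combination (-(lam^2)/4) * hsc
  have hPhi : (1 : ℂ) + lam + lam^2 + lam^3 + lam^4 ≠ 0 := by
    rw [← hprod]; exact mul_ne_zero hdA hdB
  have hkey : (1 - (c-1)/2*lam + lam^2)⁻¹ + (1 + (c+1)/2*lam + lam^2)⁻¹
      = (2 + lam + 2*lam^2)/(1 + lam + lam^2 + lam^3 + lam^4) := by
    rw [inv_add_inv hdA hdB, hprod]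
    congr 1
    ring
  calc (1/10 : ℂ) * ((1 - 2*lam + lam^2)⁻¹ + (1 - (c-1)/2*lam + lam^2)⁻¹
          + (1 + (c+1)/2*lam + lam^2)⁻¹ + (1 + (c+1)/2*lam + lam^2)⁻¹
          + (1 - (c-1)/2*lam + lam^2)⁻¹
          + ((1 - lam^2)⁻¹ + (1 - lam^2)⁻¹ + (1 - lam^2)⁻¹ + (1 - lam^2)⁻¹ + (1 - lam^2)⁻¹))
      = (1/10 : ℂ) * ((1 - 2*lam + lam^2)⁻¹
          + 2*((2 + lam + 2*lam^2)/(1 + lam + lam^2 + lam^3 + lam^4)) + 5*(1 - lam^2)⁻¹) := by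
        rw [← hkey]; ring
    _ = 1 / ((1 - lam ^ 2) * (1 - lam ^ 5)) := by
        field_simp
        ring
end
end
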